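/- Let T > 0, let L > 0, and let g : [0, T] → ℝ be continuous. If the sums S²_n = Σ_{i=0}^{⌊nT⌋−1} (g((i+1)/n) − g(i/n))² converge to L as n → ∞, then the sums S¹_n = Σ_{i=0}^{⌊nT⌋−1} |g((i+1)/n) − g(i/n)| tend to +∞ as n → ∞. -/

import Mathlib

open Filter

/-- If the discrete quadratic-variation sums of a continuous function `g` on `[0, T]`
converge to a positive limit `L`, then its discrete first-variation sums tend to `+∞`. -/
theorem first_variation_tendsto_atTop_of_quadratic_variation_tendsto
    (T L : ℝ) (hT : 0 < T) (hL : 0 < L) (g : ℝ → ℝ)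
    (hg : ContinuousOn g (Set.Icc 0 T))
    (hQV : Tendsto
      (fun n : ℕ => ∑ i ∈ Finset.range ⌊(n : ℝ) * T⌋₊,
        (g ((i + 1 : ℕ) / (n : ℝ)) - g ((i : ℕ) / (n : ℝ))) ^ 2)
      atTop (nhds L)) :
    Tendsto
      (fun n : ℕ => ∑ i ∈ Finset.range ⌊(n : ℝ) * T⌋₊,
        |g ((i + 1 : ℕ) / (n : ℝ)) - g ((i : ℕ) / (n : ℝ))|)
      atTop atTop := by
  have hUC : UniformContinuousOn g (Set.Icc 0 T) :=
    (isCompact_Icc).uniformContinuousOn_of_continuous hg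
  rw [tendsto_atTop]
  intro C
  set M : ℝ := max C 1 with hM
  have hM1 : (1 : ℝ) ≤ M := le_max_right _ _
  have hMpos : 0 < M := lt_of_lt_of_le one_pos hM1
  set ε : ℝ := L / (2 * M) with hε
  have hεpos : 0 < ε := div_pos hL (by linarith)
  obtain ⟨δ, hδ, H⟩ := Metric.uniformContinuousOn_iff.mp hUC ε hεpos
  filter_upwards [hQV.eventually (eventually_ge_nhds (by linarith : L / 2 < L)),
    eventually_ge_atTop (⌈1 / δ⌉₊ + 1)] with n hS2 hn
  have hn1 : 1 ≤ n := le_trans (Nat.le_add_left 1 _) hn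
  have hnpos : (0 : ℝ) < (n : ℝ) := by exact_mod_cast hn1
  have hinv : 1 / (n : ℝ) < δ := by
    rw [div_lt_iff₀ hnpos]
    have h1 : (1 / δ : ℝ) < (n : ℝ) := by
      calc (1 / δ : ℝ) ≤ ⌈1 / δ⌉₊ := Nat.le_ceil _
        _ < n := by exact_mod_cast hn
    calc (1 : ℝ) = δ * (1 / δ) := by field_simp
      _ < δ * n := by exact mul_lt_mul_of_pos_left h1 hδ
  -- each increment is small
  have hmem : ∀ i ∈ Finset.range ⌊(n : ℝ) * T⌋₊,
      ((i : ℕ) : ℝ) / n ∈ Set.Icc 0 T ∧ (((i + 1 : ℕ)) : ℝ) / n ∈ Set.Icc 0 T := by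
    intro i hi
    rw [Finset.mem_range] at hi
    have hi1 : ((i : ℝ) + 1) ≤ (n : ℝ) * T := by
      calc ((i : ℝ) + 1) ≤ (⌊(n : ℝ) * T⌋₊ : ℝ) := by exact_mod_cast hi
        _ ≤ (n : ℝ) * T := Nat.floor_le (by positivity)
    constructor
    · constructor
      · positivity
      · rw [div_le_iff₀ hnpos]
        nlinarith [Nat.cast_nonneg (α := ℝ) i]
    · constructor
      · positivity
      · push_cast
        rw [div_le_iff₀ hnpos]
        linarith
  have hsmall : ∀ i ∈ Finset.range ⌊(n : ℝ) * T⌋₊,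
      |g (((i + 1 : ℕ) : ℝ) / n) - g (((i : ℕ) : ℝ) / n)| ≤ ε := by
    intro i hi
    obtain ⟨h1, h2⟩ := hmem i hi
    have := H _ h2 _ h1 (by
      rw [Real.dist_eq]
      have : (((i + 1 : ℕ) : ℝ) / n - ((i : ℕ) : ℝ) / n) = 1 / n := by
        push_cast; field_simp; ring
      rw [this, abs_of_pos (by positivity)]
      exact hinv)
    rw [Real.dist_eq] at this
    exact this.le
  have hkey : (∑ i ∈ Finset.range ⌊(n : ℝ) * T⌋₊,
        (g (((i + 1 : ℕ) : ℝ) / n) - g (((i : ℕ) : ℝ) / n)) ^ 2)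
      ≤ ε * ∑ i ∈ Finset.range ⌊(n : ℝ) * T⌋₊,
        |g (((i + 1 : ℕ) : ℝ) / n) - g (((i : ℕ) : ℝ) / n)| := by
    rw [Finset.mul_sum]
    apply Finset.sum_le_sum
    intro i hi
    have h1 := hsmall i hi
    have h2 := abs_nonneg (g (((i + 1 : ℕ) : ℝ) / n) - g (((i : ℕ) : ℝ) / n))
    nlinarith [sq_abs (g (((i + 1 : ℕ) : ℝ) / n) - g (((i : ℕ) : ℝ) / n))]
  have hS1 : L / 2 ≤ ε * ∑ i ∈ Finset.range ⌊(n : ℝ) * T⌋₊,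
      |g (((i + 1 : ℕ) : ℝ) / n) - g (((i : ℕ) : ℝ) / n)| := le_trans hS2 hkey
  have : M ≤ ∑ i ∈ Finset.range ⌊(n : ℝ) * T⌋₊,
      |g (((i + 1 : ℕ) : ℝ) / n) - g (((i : ℕ) : ℝ) / n)| := by
    rw [hε] at hS1
    rw [div_mul_eq_mul_div, le_div_iff₀ (by linarith)] at hS1
    nlinarith
  exact le_trans (le_max_left C 1) this
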